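/- In the polynomial ring ℚ[w1,w2,w3,τ], substitute u1 = w2 + w3, u2 = w1 + w3, u3 = w1 + w2. Then 12·det(q0(u) + τ·q∞(u)) = (5τ² + 3)·P0(w) + (τ³ − τ)·P∞(w), where q0(u) and q∞(u) are the explicit symmetric 3×3 matrices in the context, P0(w) = (w2² − w3²)(w3² − w1²)(w1² − w2²), and P∞(w) = w1⁶ + w2⁶ + w3⁶ + (w1² + w2² + w3²)(w1⁴ + w2⁴ + w3⁴) − 12w1²w2²w3². (This computes the discriminant curve of the conic bundle on the S6-invariant quartics and identifies it with the member Δ_{s(τ)} of the Wiman–Edge pencil, where s(τ) = (τ³−τ)/(5τ²+3); Lemma 3.11 and Theorem 1.3.) -/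
import Mathlib


open MvPolynomial

namespace Stmt4

noncomputable section

/-- The polynomial ring ℚ[w1,w2,w3,τ]. -/
abbrev R : Type := MvPolynomial (Fin 4) ℚ

def w1 : R := X 0
def w2 : R := X 1
def w3 : R := X 2
def τ : R := X 3

/-- The substitution u1 = w2 + w3, u2 = w1 + w3, u3 = w1 + w2. -/
def u1 : R := w2 + w3
def u2 : R := w1 + w3
def u3 : R := w1 + w2

/-- The symmetric matrix q0(u). -/
def q0 : Matrix (Fin 3) (Fin 3) R :=
  !![0,                         C (1/2 : ℚ) * (u3*(u2 - u1)), C (1/2 : ℚ) * (u2*(u1 - u3));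
     C (1/2 : ℚ) * (u3*(u2 - u1)), 0,                         C (1/2 : ℚ) * (u1*(u3 - u2));
     C (1/2 : ℚ) * (u2*(u1 - u3)), C (1/2 : ℚ) * (u1*(u3 - u2)), 0]

/-- The symmetric matrix q∞(u). -/
def qinf : Matrix (Fin 3) (Fin 3) R :=
  !![C (2/3 : ℚ) * (u2^2 - u2*u3 + u3^2),
       C (1/6 : ℚ) * (u3*(u1 + u2) - 2*u1*u2 - 2*u3^2),
       C (1/6 : ℚ) * (u2*(u1 + u3) - 2*u1*u3 - 2*u2^2);
     C (1/6 : ℚ) * (u3*(u1 + u2) - 2*u1*u2 - 2*u3^2),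
       C (2/3 : ℚ) * (u1^2 - u1*u3 + u3^2),
       C (1/6 : ℚ) * (u1*(u2 + u3) - 2*u2*u3 - 2*u1^2);
     C (1/6 : ℚ) * (u2*(u1 + u3) - 2*u1*u3 - 2*u2^2),
       C (1/6 : ℚ) * (u1*(u2 + u3) - 2*u2*u3 - 2*u1^2),
       C (2/3 : ℚ) * (u1^2 - u1*u2 + u2^2)]

/-- The sextic P0 defining (together with P∞) the Wiman–Edge pencil. -/
def P0 : R := (w2^2 - w3^2) * (w3^2 - w1^2) * (w1^2 - w2^2)

/-- The sextic P∞. -/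
def Pinf : R :=
  w1^6 + w2^6 + w3^6 + (w1^2 + w2^2 + w3^2) * (w1^4 + w2^4 + w3^4) - 12*w1^2*w2^2*w3^2

end

/-- Lemma 3.11: the discriminant of the conic bundle q0(u) + τ·q∞(u) is the member
Δ_{s(τ)} of the Wiman–Edge pencil, where s(τ) = (τ³−τ)/(5τ²+3). -/
theorem discriminant_is_wiman_edge :
    12 * (q0 + τ • qinf).det = (5*τ^2 + 3) * P0 + (τ^3 - τ) * Pinf := by
  have h3 : ((3:R)) = C (3:ℚ) := (map_ofNat C 3).symm
  have h4 : ((4:R)) = C (4:ℚ) := (map_ofNat C 4).symm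
  have h216 : ((216:R)) = C (216:ℚ) := (map_ofNat C 216).symm
  have h1 : (C (1/2 : ℚ) : R) = 3 * C (1/6 : ℚ) := by rw [h3, ← map_mul]; norm_num
  have h2 : (C (2/3 : ℚ) : R) = 4 * C (1/6 : ℚ) := by rw [h4, ← map_mul]; norm_num
  have hc : (216 : R) * (C (1/6 : ℚ))^3 = 1 := by
    rw [h216, ← map_pow, ← map_mul]; norm_num
  simp only [Matrix.det_fin_three, q0, qinf, Matrix.add_apply, Matrix.smul_apply,
    Matrix.cons_val', Matrix.cons_val_zero, Matrix.cons_val_one, Matrix.head_cons,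
    Matrix.empty_val', Matrix.cons_val_fin_one, Matrix.head_fin_const,
    Matrix.cons_val_two, Matrix.tail_cons, Matrix.of_apply,
    smul_eq_mul, u1, u2, u3, P0, Pinf, h1, h2]
  linear_combination ((5*τ^2 + 3) * ((w2^2 - w3^2) * (w3^2 - w1^2) * (w1^2 - w2^2)) + (τ^3 - τ) * (w1^6 + w2^6 + w3^6 + (w1^2 + w2^2 + w3^2) * (w1^4 + w2^4 + w3^4) - 12*w1^2*w2^2*w3^2)) * hc

end Stmt4
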